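/- Let ξ satisfy the curve condition, let 0 < r₀ < r̃₀, and assume the functions x ↦ s(x) and x ↦ r(x) are differentiable on Γ_{r₀} \ Γ. Then for every x ∈ Γ_{r₀} \ Γ, ∇r(x) = (x − ξ(s(x))) / |x − ξ(s(x))|; in particular |∇r(x)| = 1 and ∇s(x) · ∇r(x) = 0. -/

import Mathlib

open scoped RealInnerProductSpace
open Filter Topology Set

/-- The Laplacian of `f : ℝⁿ → ℝ`: the sum of the second derivatives along the
standard orthonormal coordinate directions. -/
noncomputable def lap {n : ℕ} (f : EuclideanSpace ℝ (Fin n) → ℝ)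
    (x : EuclideanSpace ℝ (Fin n)) : ℝ :=
  ∑ i : Fin n, iteratedFDeriv ℝ 2 f x ![EuclideanSpace.single i 1, EuclideanSpace.single i 1]

/-- `m_* = 0` if `n = 2` and `(n-3)/(n-1)` if `n ≥ 3`. -/
noncomputable def mstar (n : ℕ) : ℝ := if n = 2 then 0 else ((n : ℝ) - 3) / ((n : ℝ) - 1)

lemma fderiv_eq_inner_gradient {n : ℕ} (f : EuclideanSpace ℝ (Fin n) → ℝ)
    (x w : EuclideanSpace ℝ (Fin n)) :
    fderiv ℝ f x w = ⟪gradient f x, w⟫ := by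
  have h : fderiv ℝ f x = InnerProductSpace.toDual ℝ _ (gradient f x) :=
    ((InnerProductSpace.toDual ℝ _).apply_symm_apply _).symm
  rw [h, InnerProductSpace.toDual_apply_apply]

theorem stmt_8 (n : ℕ) (hn : 2 ≤ n)
    (ξ : ℝ → EuclideanSpace ℝ (Fin n))
    (hξC3 : ContDiff ℝ 3 ξ) (hξinj : Function.Injective ξ)
    (hξ1 : ∀ σ : ℝ, ‖deriv ξ σ‖ = 1)
    (K : ℝ) (hK : 1 < K)
    (hξ2 : ∀ σ : ℝ, ‖deriv (deriv ξ) σ‖ ≤ K)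
    (hξ3 : ∀ σ : ℝ, ‖deriv (deriv (deriv ξ)) σ‖ ≤ K)
    (r : EuclideanSpace ℝ (Fin n) → ℝ)
    (hrdef : ∀ x, r x = Metric.infDist x (Set.range ξ))
    (rt0 : ℝ) (hrt0 : 0 < rt0) (hrt0' : rt0 < (2 * K)⁻¹)
    (s : EuclideanSpace ℝ (Fin n) → ℝ)
    (hsdef : ∀ x, r x < rt0 →
      r x = ‖x - ξ (s x)‖ ∧ ∀ σ : ℝ, r x = ‖x - ξ σ‖ → σ = s x)
    (r₀ : ℝ) (hr₀ : 0 < r₀) (hr₀' : r₀ < rt0)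
    (hsdiff : ∀ x : EuclideanSpace ℝ (Fin n), r x < r₀ → x ∉ Set.range ξ →
      DifferentiableAt ℝ s x)
    (hrdiff : ∀ x : EuclideanSpace ℝ (Fin n), r x < r₀ → x ∉ Set.range ξ →
      DifferentiableAt ℝ r x) :
    ∀ x : EuclideanSpace ℝ (Fin n), r x < r₀ → x ∉ Set.range ξ →
      gradient r x = ‖x - ξ (s x)‖⁻¹ • (x - ξ (s x)) ∧
      ‖gradient r x‖ = 1 ∧
      ⟪gradient s x, gradient r x⟫ = 0 := by
  intro x hxr hxΓ
  have hxrt : r x < rt0 := hxr.trans hr₀'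
  obtain ⟨hrx, huniq⟩ := hsdef x hxrt
  set v : EuclideanSpace ℝ (Fin n) := x - ξ (s x) with hv
  have hvne : v ≠ 0 := by
    intro h
    exact hxΓ ⟨s x, by rw [hv, sub_eq_zero] at h; exact h.symm⟩
  have hv0 : (0:ℝ) < ‖v‖ := norm_pos_iff.mpr hvne
  set u : EuclideanSpace ℝ (Fin n) := ‖v‖⁻¹ • v with hu
  have hunorm : ‖u‖ = 1 := by
    rw [hu, norm_smul, norm_inv, norm_norm, inv_mul_cancel₀ hv0.ne']
  have hvu : ‖v‖ • u = v := by
    rw [hu, smul_smul, mul_inv_cancel₀ hv0.ne', one_smul]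
  have hlip : LipschitzWith 1 r := by
    have hrfun : r = fun y => Metric.infDist y (Set.range ξ) := funext hrdef
    rw [hrfun]; exact Metric.lipschitz_infDist_pt _
  have hrle : ∀ y, r y ≤ ‖y - ξ (s x)‖ := fun y => by
    rw [hrdef y, ← dist_eq_norm]
    exact Metric.infDist_le_dist_of_mem ⟨s x, rfl⟩
  have hdiffr := hrdiff x hxr hxΓ
  have hdiffs := hsdiff x hxr hxΓ
  have hline : ∀ t : ℝ, HasDerivAt (fun t : ℝ => x + t • u) u t := by
    intro t
    simpa using ((hasDerivAt_id t).smul_const u).const_add x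
  have hkey : ∀ t : ℝ, x + t • u - ξ (s x) = (‖v‖ + t) • u := by
    intro t
    rw [add_smul, hvu, hv]
    abel
  -- Step A : the directional derivative of r along u equals 1
  have hfd : HasDerivAt (fun t : ℝ => r (x + t • u)) (fderiv ℝ r x u) 0 := by
    have h1 : HasFDerivAt r (fderiv ℝ r x) (x + (0:ℝ) • u) := by
      simpa using hdiffr.hasFDerivAt
    simpa [Function.comp_def] using h1.comp_hasDerivAt 0 (hline 0)
  have hA : fderiv ℝ r x u = 1 := by
    have hφ : HasDerivAt (fun t : ℝ => r (x + t • u) - (r x + t)) (fderiv ℝ r x u - 1) 0 :=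
      hfd.sub ((hasDerivAt_id (0:ℝ)).const_add (r x))
    have hmax : IsLocalMax (fun t : ℝ => r (x + t • u) - (r x + t)) 0 := by
      have hev : ∀ᶠ t in 𝓝 (0:ℝ), -‖v‖ < t := eventually_gt_nhds (by linarith)
      filter_upwards [hev] with t ht
      have h1 : r (x + t • u) ≤ ‖v‖ + t := by
        calc r (x + t • u) ≤ ‖x + t • u - ξ (s x)‖ := hrle _
          _ = ‖(‖v‖ + t) • u‖ := by rw [hkey]
          _ = |‖v‖ + t| := by rw [norm_smul, hunorm, mul_one, Real.norm_eq_abs]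
          _ = ‖v‖ + t := abs_of_nonneg (by linarith)
      show r (x + t • u) - (r x + t) ≤ r (x + (0:ℝ) • u) - (r x + 0)
      have h0 : x + (0:ℝ) • u = x := by simp
      rw [h0]
      have : r x = ‖v‖ := hrx
      linarith
    have := hmax.hasDerivAt_eq_zero hφ
    linarith
  have hAi : ⟪gradient r x, u⟫ = 1 := by
    rw [← fderiv_eq_inner_gradient]; exact hA
  -- Step B : the gradient of r equals u
  have hBle : ‖gradient r x‖ ≤ 1 := by
    calc ‖gradient r x‖ = ‖fderiv ℝ r x‖ :=
          (InnerProductSpace.toDual ℝ _).symm.norm_map (fderiv ℝ r x)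
      _ ≤ 1 := by simpa using norm_fderiv_le_of_lipschitz ℝ hlip (x₀ := x)
  have hgeq : gradient r x = u := by
    have hsq : ‖gradient r x - u‖ ^ 2 =
        ‖gradient r x‖ ^ 2 - 2 * ⟪gradient r x, u⟫ + ‖u‖ ^ 2 := norm_sub_sq_real _ _
    have h2 : ‖gradient r x - u‖ ^ 2 ≤ 0 := by
      rw [hsq, hAi, hunorm]
      nlinarith [norm_nonneg (gradient r x)]
    have h3 : gradient r x - u = 0 := by
      rw [← norm_eq_zero]
      nlinarith [norm_nonneg (gradient r x - u)]
    exact sub_eq_zero.mp h3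
  -- Step C : the directional derivative of s along u is 0
  have hfds : HasDerivAt (fun t : ℝ => s (x + t • u)) (fderiv ℝ s x u) 0 := by
    have h1 : HasFDerivAt s (fderiv ℝ s x) (x + (0:ℝ) • u) := by
      simpa using hdiffs.hasFDerivAt
    simpa [Function.comp_def] using h1.comp_hasDerivAt 0 (hline 0)
  have hconst : ∀ t : ℝ, -‖v‖ < t → t ≤ 0 → s (x + t • u) = s x := by
    intro t ht ht0
    have hnorm : ‖x + t • u - ξ (s x)‖ = ‖v‖ + t := by
      rw [hkey, norm_smul, hunorm, mul_one, Real.norm_eq_abs, abs_of_nonneg (by linarith)]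
    have hle : r (x + t • u) ≤ ‖v‖ + t := by rw [← hnorm]; exact hrle _
    have hge : ‖v‖ + t ≤ r (x + t • u) := by
      have h := Metric.infDist_le_infDist_add_dist (x := x) (y := x + t • u)
        (s := Set.range ξ)
      rw [← hrdef, ← hrdef] at h
      have hd : dist x (x + t • u) = -t := by
        have hxx : x - (x + t • u) = (-t) • u := by module
        rw [dist_eq_norm, hxx, norm_smul, hunorm, mul_one, Real.norm_eq_abs,
          abs_of_nonneg (by linarith)]
      have hrx' : r x = ‖v‖ := hrx
      rw [hd, hrx'] at h
      linarith
    have heq : r (x + t • u) = ‖x + t • u - ξ (s x)‖ := by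
      rw [hnorm]; linarith
    have hrt : r (x + t • u) < rt0 := by
      rw [heq, hnorm]
      have hrx' : r x = ‖v‖ := hrx
      linarith [hxrt]
    exact ((hsdef _ hrt).2 (s x) heq).symm
  have hC : fderiv ℝ s x u = 0 := by
    have h1 : HasDerivWithinAt (fun t : ℝ => s (x + t • u)) (fderiv ℝ s x u) (Iio 0) 0 :=
      hfds.hasDerivWithinAt
    have h2 : HasDerivWithinAt (fun t : ℝ => s (x + t • u)) 0 (Iio 0) 0 := by
      apply (hasDerivWithinAt_const (0:ℝ) (Iio (0:ℝ)) (s x)).congr_of_eventuallyEq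
      · have hev : ∀ᶠ t in 𝓝[Iio (0:ℝ)] 0, -‖v‖ < t :=
          eventually_nhdsWithin_of_eventually_nhds (eventually_gt_nhds (by linarith))
        filter_upwards [hev, self_mem_nhdsWithin] with t ht ht'
        exact hconst t ht (le_of_lt ht')
      · simp
    rw [← h1.derivWithin (uniqueDiffWithinAt_Iio (0:ℝ)),
      h2.derivWithin (uniqueDiffWithinAt_Iio (0:ℝ))]
  refine ⟨hgeq, ?_, ?_⟩
  · rw [hgeq, hunorm]
  · rw [hgeq, ← fderiv_eq_inner_gradient]
    exact hC
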